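/- Let G be a group with subgroup H, R a normed ring, M a finitely generated projective RG-module with filling norm ‖·‖_M (as RG-module), and N a finitely generated RH-module with filling norm ‖·‖_N which is an internal direct summand of M as an RH-module. Then ‖·‖_N and the restriction of ‖·‖_M to N are equivalent. -/

import Mathlib

variable {R : Type*} [Ring R]

/-- The ℓ¹-norm on a group ring `MonoidAlgebra R Γ` induced by the free `R`-basis `Γ`. -/
noncomputable def l1GroupRing {Γ : Type*} (ν : RingNorm R) (a : MonoidAlgebra R Γ) : ℝ :=
  a.coeff.sum fun _ r => ν r

/-- The ℓ¹-norm on the finitely generated based free module `Λ → MonoidAlgebra R Γ`. -/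
noncomputable def l1Free {Γ Λ : Type*} [Fintype Λ] (ν : RingNorm R)
    (x : Λ → MonoidAlgebra R Γ) : ℝ :=
  ∑ i, l1GroupRing ν (x i)

/-- The filling norm on a `MonoidAlgebra R Γ`-module `P` induced by a surjection from a
finitely generated based free module. -/
noncomputable def fillingNorm {Γ : Type*} [Monoid Γ] {Λ : Type*} [Fintype Λ]
    {P : Type*} [AddCommGroup P] [Module (MonoidAlgebra R Γ) P] (ν : RingNorm R)
    (ρ : (Λ → MonoidAlgebra R Γ) →ₗ[MonoidAlgebra R Γ] P) (p : P) : ℝ :=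
  sInf {c : ℝ | ∃ x, ρ x = p ∧ l1Free ν x = c}

namespace FNaux

variable {Γ : Type*} (ν : RingNorm R)

theorem l1GR_def (a : MonoidAlgebra R Γ) :
    l1GroupRing ν a = ∑ g ∈ a.coeff.support, ν (a.coeff g) := rfl

theorem l1GR_nonneg (a : MonoidAlgebra R Γ) : 0 ≤ l1GroupRing ν a :=
  Finset.sum_nonneg fun _ _ => apply_nonneg ν _

theorem l1GR_eq_sum {a : MonoidAlgebra R Γ} {S : Finset Γ} (h : a.coeff.support ⊆ S) :
    l1GroupRing ν a = ∑ g ∈ S, ν (a.coeff g) := by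
  rw [l1GR_def]
  exact Finset.sum_subset h fun x _ hx => by
    rw [Finsupp.notMem_support_iff.mp hx, map_zero]

theorem l1GR_add_le (a b : MonoidAlgebra R Γ) :
    l1GroupRing ν (a + b) ≤ l1GroupRing ν a + l1GroupRing ν b := by
  classical
  rw [l1GR_eq_sum ν (a := a + b) (S := a.coeff.support ∪ b.coeff.support) Finsupp.support_add,
    l1GR_eq_sum ν (S := a.coeff.support ∪ b.coeff.support) Finset.subset_union_left,
    l1GR_eq_sum ν (S := a.coeff.support ∪ b.coeff.support) Finset.subset_union_right,
    ← Finset.sum_add_distrib]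
  exact Finset.sum_le_sum fun g _ => map_add_le_add ν _ _

theorem l1GR_zero : l1GroupRing ν (0 : MonoidAlgebra R Γ) = 0 := by
  simp [l1GR_def]

theorem l1GR_sum_le {ι : Type*} (s : Finset ι) (f : ι → MonoidAlgebra R Γ) :
    l1GroupRing ν (∑ i ∈ s, f i) ≤ ∑ i ∈ s, l1GroupRing ν (f i) := by
  classical
  induction s using Finset.cons_induction with
  | empty => simp [l1GR_zero]
  | cons i s his ih =>
    rw [Finset.sum_cons, Finset.sum_cons]
    exact (l1GR_add_le ν _ _).trans (by linarith)

theorem l1GR_single (g : Γ) (r : R) :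
    l1GroupRing ν (MonoidAlgebra.single g r) = ν r := by
  unfold l1GroupRing
  exact Finsupp.sum_single_index (map_zero ν)

theorem l1GR_single_le (g : Γ) (r : R) :
    l1GroupRing ν (MonoidAlgebra.single g r) ≤ ν r := (l1GR_single ν g r).le

theorem l1GR_mul_le [Monoid Γ] (a b : MonoidAlgebra R Γ) :
    l1GroupRing ν (a * b) ≤ l1GroupRing ν a * l1GroupRing ν b := by
  classical
  rw [MonoidAlgebra.mul_def]
  unfold Finsupp.sum
  refine (l1GR_sum_le ν _ _).trans ?_
  rw [l1GR_def ν a, l1GR_def ν b, Finset.sum_mul]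
  refine Finset.sum_le_sum fun g _ => ?_
  refine (l1GR_sum_le ν _ _).trans ?_
  rw [Finset.mul_sum]
  refine Finset.sum_le_sum fun g' _ => ?_
  exact (l1GR_single_le ν _ _).trans (map_mul_le_mul ν _ _)

theorem l1GR_mapDomain {Γ' : Type*} {f : Γ → Γ'} (hf : Function.Injective f)
    (a : MonoidAlgebra R Γ) :
    l1GroupRing ν (MonoidAlgebra.mapDomain f a) = l1GroupRing ν a := by
  classical
  rw [l1GR_eq_sum ν (a := MonoidAlgebra.mapDomain f a) (S := a.coeff.support.image f)
    Finsupp.mapDomain_support, l1GR_def,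
    Finset.sum_image (fun x _ y _ h => hf h)]
  exact Finset.sum_congr rfl fun g _ => by rw [show (MonoidAlgebra.mapDomain f a).coeff = Finsupp.mapDomain f a.coeff from rfl,
      Finsupp.mapDomain_apply hf]



variable {Λ : Type*} [Fintype Λ]

theorem l1F_nonneg (x : Λ → MonoidAlgebra R Γ) : 0 ≤ l1Free ν x :=
  Finset.sum_nonneg fun _ _ => l1GR_nonneg ν _

theorem l1F_smul_le [Monoid Γ] (a : MonoidAlgebra R Γ) (x : Λ → MonoidAlgebra R Γ) :
    l1Free ν (a • x) ≤ l1GroupRing ν a * l1Free ν x := by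
  unfold l1Free
  rw [Finset.mul_sum]
  refine Finset.sum_le_sum fun i _ => ?_
  rw [Pi.smul_apply, smul_eq_mul]
  exact l1GR_mul_le ν _ _

theorem l1F_sum_le {ι : Type*} (s : Finset ι) (f : ι → Λ → MonoidAlgebra R Γ) :
    l1Free ν (∑ i ∈ s, f i) ≤ ∑ i ∈ s, l1Free ν (f i) := by
  unfold l1Free
  rw [Finset.sum_comm]
  refine Finset.sum_le_sum fun i _ => ?_
  rw [Finset.sum_apply]
  exact l1GR_sum_le ν _ _

variable [Monoid Γ] {P : Type*} [AddCommGroup P] [Module (MonoidAlgebra R Γ) P]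
  (ρ : (Λ → MonoidAlgebra R Γ) →ₗ[MonoidAlgebra R Γ] P)

theorem fill_bddBelow (p : P) :
    BddBelow {c : ℝ | ∃ x, ρ x = p ∧ l1Free ν x = c} :=
  ⟨0, fun _ ⟨_, _, hx⟩ => hx ▸ l1F_nonneg ν _⟩

theorem fill_le {x : Λ → MonoidAlgebra R Γ} {p : P} (h : ρ x = p) :
    fillingNorm ν ρ p ≤ l1Free ν x :=
  csInf_le (fill_bddBelow ν ρ p) ⟨x, h, rfl⟩

theorem le_fill (hρ : Function.Surjective ρ) {p : P} {c : ℝ}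
    (h : ∀ x, ρ x = p → c ≤ l1Free ν x) : c ≤ fillingNorm ν ρ p := by
  refine le_csInf ⟨l1Free ν (hρ p).choose, (hρ p).choose, (hρ p).choose_spec, rfl⟩ ?_
  rintro d ⟨x, hx, rfl⟩
  exact h x hx

theorem fill_nonneg (p : P) : 0 ≤ fillingNorm ν ρ p :=
  Real.sInf_nonneg fun _ ⟨_, _, hx⟩ => hx ▸ l1F_nonneg ν _

/-- if `fill p ≤ c * l1 y` for every preimage `y` of `q` under `ρ'`,
then `fill p ≤ c * fill q`. -/
theorem fill_le_mul_fill {Γ' : Type*} [Monoid Γ'] {Λ' : Type*} [Fintype Λ']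
    {P' : Type*} [AddCommGroup P'] [Module (MonoidAlgebra R Γ') P']
    (ρ' : (Λ' → MonoidAlgebra R Γ') →ₗ[MonoidAlgebra R Γ'] P') (hρ' : Function.Surjective ρ')
    {p : P} {q : P'} {c : ℝ} (hc : 0 < c)
    (h : ∀ y, ρ' y = q → fillingNorm ν ρ p ≤ c * l1Free ν y) :
    fillingNorm ν ρ p ≤ c * fillingNorm ν ρ' q := by
  rw [← div_le_iff₀' hc]
  refine le_fill ν ρ' hρ' fun y hy => ?_
  rw [div_le_iff₀' hc]
  exact h y hy

end FNaux

open FNaux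

/-- Let `M` be a finitely generated projective `RG`-module with a filling norm, and `N` a
finitely generated `RH`-module with a filling norm which is an internal direct summand of `M`
as an `RH`-module (`H ≤ G`). Then the filling norm of `N` and the restriction to `N` of the
filling norm of `M` are equivalent. -/
theorem fillingNorm_summand_equiv {G : Type*} [Group G] (H : Subgroup G) (ν : RingNorm R)
    {M : Type*} [AddCommGroup M] [Module (MonoidAlgebra R G) M]
    [Module.Finite (MonoidAlgebra R G) M] [Module.Projective (MonoidAlgebra R G) M]
    {ΛM : Type*} [Fintype ΛM]
    (ρM : (ΛM → MonoidAlgebra R G) →ₗ[MonoidAlgebra R G] M)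
    (hρM : Function.Surjective ρM) :
    letI : Module (MonoidAlgebra R ↥H) M :=
      Module.compHom _ (MonoidAlgebra.mapDomainRingHom R H.subtype)
    ∀ (N N' : Submodule (MonoidAlgebra R ↥H) M), IsCompl N N' →
      ∀ {ΛN : Type*} [Fintype ΛN]
        (ρN : (ΛN → MonoidAlgebra R ↥H) →ₗ[MonoidAlgebra R ↥H] N),
        Function.Surjective ρN → Module.Finite (MonoidAlgebra R ↥H) N →
        ∃ C : ℝ, 0 < C ∧ ∀ n : N,
          C⁻¹ * fillingNorm ν ρN n ≤ fillingNorm ν ρM (n : M) ∧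
          fillingNorm ν ρM (n : M) ≤ C * fillingNorm ν ρN n := by
  intro N N' hc ΛN instΛN ρN hρN _
  letI instBM : Module (MonoidAlgebra R ↥H) M :=
    Module.compHom _ (MonoidAlgebra.mapDomainRingHom R H.subtype)
  classical
  let ι : MonoidAlgebra R ↥H →+* MonoidAlgebra R G :=
    MonoidAlgebra.mapDomainRingHom R H.subtype
  have hsmul : ∀ (b : MonoidAlgebra R ↥H) (m : M), b • m = ι b • m := fun _ _ => rfl
  have hiota : ∀ b : MonoidAlgebra R ↥H, l1GroupRing ν (ι b) = l1GroupRing ν b := fun b =>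
    l1GR_mapDomain ν (Subtype.val_injective) b
  -- the splitting of ρM
  obtain ⟨s, hsc⟩ := Module.projective_lifting_property ρM LinearMap.id hρM
  have hs : ∀ m : M, ρM (s m) = m := fun m => by
    have := LinearMap.ext_iff.mp hsc m
    simpa using this
  -- generators
  set mM : ΛM → M := fun i => ρM (fun j => if i = j then 1 else 0) with hmM
  set nj : ΛN → N := fun j => ρN (fun k => if j = k then 1 else 0) with hnj
  choose xj hxj using fun j => hρM ((nj j : M))
  -- the projection onto N
  set π : M →ₗ[MonoidAlgebra R ↥H] N := Submodule.linearProjOfIsCompl N N' hc with hπ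
  -- coset machinery
  let τ : G → G := fun g => (Quotient.mk (QuotientGroup.rightRel H) g).out
  have hτc : ∀ g : G, g * (τ g)⁻¹ ∈ H := by
    intro g
    exact QuotientGroup.rightRel_apply.mp
      (Quotient.exact (Quotient.out_eq (Quotient.mk (QuotientGroup.rightRel H) g)))
  have hτH : ∀ (h : ↥H) (g : G), τ ((h : G) * g) = τ g := by
    intro h g
    have : Quotient.mk (QuotientGroup.rightRel H) ((h : G) * g)
        = Quotient.mk (QuotientGroup.rightRel H) g := by
      refine Quotient.sound (QuotientGroup.rightRel_apply.mpr ?_)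
      simpa using h.2
    simp only [τ, this]
  set T0 : Finset G :=
    Finset.univ.biUnion fun j : ΛN => Finset.univ.biUnion fun i : ΛM =>
      (s ((nj j : M)) i).coeff.support with hT0
  set F : Finset G := T0.image τ with hF
  set wN : ΛM → G → N := fun i t => π (MonoidAlgebra.single t (1 : R) • mM i) with hwN
  choose yw hyw using fun (i : ΛM) (t : G) => hρN (wN i t)
  -- constants
  set C1 : ℝ := (∑ j, l1Free ν (xj j)) + 1 with hC1
  have hxjle : ∀ j, l1Free ν (xj j) ≤ C1 := by
    intro j
    have h1 : l1Free ν (xj j) ≤ ∑ j', l1Free ν (xj j') :=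
      Finset.single_le_sum (fun j' _ => l1F_nonneg ν (xj j')) (Finset.mem_univ j)
    rw [hC1]; linarith
  have hC1pos : 0 < C1 := by
    have := Finset.sum_nonneg fun j (_ : j ∈ Finset.univ) => l1F_nonneg ν (xj j)
    rw [hC1]; linarith
  set C2 : ℝ := (∑ i, ∑ t ∈ F, l1Free ν (yw i t)) + 1 with hC2
  have hywle : ∀ i, ∀ t ∈ F, l1Free ν (yw i t) ≤ C2 := by
    intro i t ht
    have h1 : l1Free ν (yw i t) ≤ ∑ t' ∈ F, l1Free ν (yw i t') :=
      Finset.single_le_sum (fun t' _ => l1F_nonneg ν _) ht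
    have h2 : ∑ t' ∈ F, l1Free ν (yw i t') ≤ ∑ i', ∑ t' ∈ F, l1Free ν (yw i' t') :=
      Finset.single_le_sum
        (fun i' _ => Finset.sum_nonneg fun t' _ => l1F_nonneg ν _) (Finset.mem_univ i)
    rw [hC2]; linarith
  have hC2pos : 0 < C2 := by
    have := Finset.sum_nonneg fun i (_ : i ∈ Finset.univ) =>
      Finset.sum_nonneg fun t (_ : t ∈ F) => l1F_nonneg ν (yw i t)
    rw [hC2]; linarith
  set K : ℝ := (∑ i, l1Free ν (s (mM i))) + 1 with hK
  have hsmle : ∀ i, l1Free ν (s (mM i)) ≤ K := by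
    intro i
    have h1 : l1Free ν (s (mM i)) ≤ ∑ i', l1Free ν (s (mM i')) :=
      Finset.single_le_sum (fun i' (_ : i' ∈ Finset.univ) => l1F_nonneg ν (s (mM i'))) (Finset.mem_univ i)
    rw [hK]; linarith
  have hKpos : 0 < K := by
    have := Finset.sum_nonneg fun i (_ : i ∈ Finset.univ) => l1F_nonneg ν (s (mM i))
    rw [hK]; linarith
  set C : ℝ := max C1 (C2 * K) with hC
  have hCpos : 0 < C := lt_of_lt_of_le hC1pos (le_max_left _ _)
  refine ⟨C, hCpos, fun n => ?_⟩
  -- ################ direction 1 ################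
  have dir1 : fillingNorm ν ρM (n : M) ≤ C1 * fillingNorm ν ρN n := by
    refine fill_le_mul_fill ν ρM ρN hρN hC1pos ?_
    intro y hy
    have hρx : ρM (∑ j, ι (y j) • xj j) = (n : M) := by
      rw [map_sum]
      have h1 : ∀ j, ρM (ι (y j) • xj j) = ι (y j) • ((nj j : N) : M) := by
        intro j; rw [map_smul, hxj]
      rw [Finset.sum_congr rfl fun j _ => h1 j]
      have h2 : ρN y = ∑ j, y j • nj j := by
        simpa [hnj] using LinearMap.pi_apply_eq_sum_univ ρN y
      calc ∑ j, ι (y j) • ((nj j : N) : M)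
          = ∑ j, ((y j • nj j : N) : M) := by
            refine Finset.sum_congr rfl fun j _ => ?_
            rw [Submodule.coe_smul, hsmul]
        _ = (((∑ j, y j • nj j : N)) : M) := by rw [Submodule.coe_sum]
        _ = ((ρN y : N) : M) := by rw [← h2]
        _ = (n : M) := by rw [hy]
    refine le_trans (fill_le ν ρM hρx) ?_
    refine le_trans (l1F_sum_le ν _ _) ?_
    have h3 : ∀ j, l1Free ν (ι (y j) • xj j) ≤ l1GroupRing ν (y j) * C1 := by
      intro j
      refine le_trans (l1F_smul_le ν _ _) ?_
      rw [hiota]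
      exact mul_le_mul_of_nonneg_left (hxjle j) (l1GR_nonneg ν _)
    refine le_trans (Finset.sum_le_sum fun j _ => h3 j) ?_
    rw [← Finset.sum_mul, mul_comm]
    rfl
  -- ################ direction 2 ################
  have dir2 : fillingNorm ν ρN n ≤ (C2 * K) * fillingNorm ν ρM (n : M) := by
    refine fill_le_mul_fill ν ρN ρM hρM (mul_pos hC2pos hKpos) ?_
    intro x hx
    set z : ΛM → MonoidAlgebra R G := s (n : M) with hz
    -- support claim
    have hsupp : ∀ i : ΛM, ∀ g ∈ (z i).coeff.support, τ g ∈ F := by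
      obtain ⟨y0, hy0⟩ := hρN n
      have hn : (n : M) = ∑ j, ι (y0 j) • ((nj j : N) : M) := by
        have h2 : ρN y0 = ∑ j, y0 j • nj j := by
          simpa [hnj] using LinearMap.pi_apply_eq_sum_univ ρN y0
        calc (n : M) = ((ρN y0 : N) : M) := by rw [hy0]
          _ = (((∑ j, y0 j • nj j : N)) : M) := by rw [h2]
          _ = ∑ j, ι (y0 j) • ((nj j : N) : M) := by
              rw [Submodule.coe_sum]
              refine Finset.sum_congr rfl fun j _ => ?_
              rw [Submodule.coe_smul, hsmul]
      have hzi : ∀ i, z i = ∑ j, ι (y0 j) * (s ((nj j : N) : M) i) := by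
        intro i
        rw [hz, hn, map_sum]
        have : ∀ j, s (ι (y0 j) • ((nj j : N) : M)) = ι (y0 j) • s ((nj j : N) : M) :=
          fun j => map_smul s _ _
        rw [Finset.sum_congr rfl fun j _ => this j, Finset.sum_apply]
        refine Finset.sum_congr rfl fun j _ => ?_
        rw [Pi.smul_apply, smul_eq_mul]
      intro i g hg
      rw [hzi i, MonoidAlgebra.coeff_sum] at hg
      obtain ⟨j, -, hj⟩ := Finsupp.mem_support_finset_sum g hg
      have hmul := MonoidAlgebra.support_coeff_mul_subset (ι (y0 j)) (s ((nj j : N) : M) i) hj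
      obtain ⟨u, hu, v, hv, rfl⟩ := Finset.mem_mul.mp hmul
      have hu' : u ∈ (y0 j).coeff.support.image (H.subtype) := by
        have : (ι (y0 j)).coeff.support ⊆ (y0 j).coeff.support.image (H.subtype) :=
          Finsupp.mapDomain_support
        exact this hu
      obtain ⟨h', -, rfl⟩ := Finset.mem_image.mp hu'
      have hvT : v ∈ T0 := by
        rw [hT0]
        refine Finset.mem_biUnion.mpr ⟨j, Finset.mem_univ j, ?_⟩
        exact Finset.mem_biUnion.mpr ⟨i, Finset.mem_univ i, hv⟩
      rw [hF]
      have : τ (H.subtype h' * v) = τ v := hτH h' v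
      rw [this]
      exact Finset.mem_image_of_mem τ hvT
    -- pieces
    set St : ΛM → G → Finset G := fun i t => (z i).coeff.support.filter (fun g => τ g = t)
      with hStdef
    have hSt : ∀ i t g, g ∈ St i t → g * t⁻¹ ∈ H := by
      intro i t g hg
      obtain ⟨-, hg2⟩ := Finset.mem_filter.mp hg
      rw [← hg2]
      exact hτc g
    set b : ΛM → G → MonoidAlgebra R ↥H := fun i t =>
      ∑ g ∈ (St i t).attach,
        MonoidAlgebra.single (⟨(g : G) * t⁻¹, hSt i t g g.2⟩ : ↥H) ((z i).coeff (g : G)) with hbdef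
    have hfac : ∀ i t, (ι (b i t)) * MonoidAlgebra.single t (1 : R)
        = ∑ g ∈ St i t, MonoidAlgebra.single g ((z i).coeff g) := by
      intro i t
      rw [hbdef, map_sum, Finset.sum_mul,
        ← Finset.sum_attach (St i t) (fun g => MonoidAlgebra.single g ((z i).coeff g))]
      refine Finset.sum_congr rfl fun g _ => ?_
      have h1 : ι (MonoidAlgebra.single (⟨(g : G) * t⁻¹, hSt i t g g.2⟩ : ↥H) ((z i).coeff (g : G)))
          = MonoidAlgebra.single ((g : G) * t⁻¹) ((z i).coeff (g : G)) := by
        simp [ι, MonoidAlgebra.mapDomainRingHom_apply, Finsupp.mapDomain_single]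
      rw [h1, MonoidAlgebra.single_mul_single, inv_mul_cancel_right, mul_one]
    have hzdecomp : ∀ i, z i = ∑ t ∈ F, ∑ g ∈ St i t, MonoidAlgebra.single g ((z i).coeff g) := by
      intro i
      rw [hStdef]
      rw [Finset.sum_fiberwise_of_maps_to (hsupp i)
        (fun g => MonoidAlgebra.single g ((z i).coeff g))]
      exact (MonoidAlgebra.sum_coeff_single (z i)).symm
    -- key identity
    have hkey : n = ∑ i, ∑ t ∈ F, b i t • wN i t := by
      have h1 : (n : M) = ∑ i, ∑ t ∈ F, ι (b i t) • (MonoidAlgebra.single t (1 : R) • mM i) := by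
        conv_lhs => rw [← hs (n : M)]
        rw [show s (n : M) = z from hz.symm ▸ rfl]
        have h0 : ρM z = ∑ i, z i • mM i := by
          simpa [hmM] using LinearMap.pi_apply_eq_sum_univ ρM z
        rw [h0]
        refine Finset.sum_congr rfl fun i _ => ?_
        have hzi2 : z i = ∑ t ∈ F, ι (b i t) * MonoidAlgebra.single t (1 : R) := by
          rw [hzdecomp i]
          exact Finset.sum_congr rfl fun t _ => (hfac i t).symm
        calc z i • mM i
            = (∑ t ∈ F, ι (b i t) * MonoidAlgebra.single t (1 : R)) • mM i := by
              exact congrArg (fun a => a • mM i) hzi2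
          _ = ∑ t ∈ F, (ι (b i t) * MonoidAlgebra.single t (1 : R)) • mM i := by
              rw [Finset.sum_smul]
          _ = ∑ t ∈ F, ι (b i t) • (MonoidAlgebra.single t (1 : R) • mM i) := by
              refine Finset.sum_congr rfl fun t _ => ?_
              rw [mul_smul]
      have h2 : π (n : M) = n := Submodule.linearProjOfIsCompl_apply_left hc n
      calc n = π (n : M) := h2.symm
        _ = π (∑ i, ∑ t ∈ F, ι (b i t) • (MonoidAlgebra.single t (1 : R) • mM i)) := by
            rw [← h1]
        _ = ∑ i, ∑ t ∈ F, b i t • wN i t := by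
            rw [map_sum]
            refine Finset.sum_congr rfl fun i _ => ?_
            rw [map_sum]
            refine Finset.sum_congr rfl fun t _ => ?_
            rw [← hsmul, map_smul, hwN]
    -- assemble
    set Y : ΛN → MonoidAlgebra R ↥H := ∑ i, ∑ t ∈ F, b i t • yw i t with hY
    have hρY : ρN Y = n := by
      rw [hY, map_sum]
      rw [Finset.sum_congr rfl fun i (_ : i ∈ Finset.univ) => map_sum ρN _ F]
      rw [Finset.sum_congr rfl fun i (_ : i ∈ Finset.univ) =>
        Finset.sum_congr rfl fun t (_ : t ∈ F) => map_smul ρN (b i t) (yw i t)]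
      rw [Finset.sum_congr rfl fun i (_ : i ∈ Finset.univ) =>
        Finset.sum_congr rfl fun t (_ : t ∈ F) => by rw [hyw i t]]
      exact hkey.symm
    refine le_trans (fill_le ν ρN hρY) ?_
    have hb : ∀ i, ∑ t ∈ F, l1GroupRing ν (b i t) ≤ l1GroupRing ν (z i) := by
      intro i
      have h1 : ∀ t ∈ F, l1GroupRing ν (b i t) ≤ ∑ g ∈ St i t, ν ((z i).coeff g) := by
        intro t _
        rw [hbdef]
        refine le_trans (l1GR_sum_le ν _ _) ?_
        rw [← Finset.sum_attach (St i t) (fun g => ν ((z i).coeff g))]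
        exact Finset.sum_le_sum fun g _ => l1GR_single_le ν _ _
      refine le_trans (Finset.sum_le_sum h1) ?_
      rw [hStdef, Finset.sum_fiberwise_of_maps_to (hsupp i) (fun g => ν ((z i).coeff g)),
        l1GR_def]
    have hYle : l1Free ν Y ≤ C2 * l1Free ν z := by
      rw [hY]
      refine le_trans (l1F_sum_le ν _ _) ?_
      have h1 : ∀ i, l1Free ν (∑ t ∈ F, b i t • yw i t) ≤ C2 * l1GroupRing ν (z i) := by
        intro i
        refine le_trans (l1F_sum_le ν _ _) ?_
        have h2 : ∀ t ∈ F, l1Free ν (b i t • yw i t) ≤ l1GroupRing ν (b i t) * C2 := by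
          intro t ht
          refine le_trans (l1F_smul_le ν _ _) ?_
          exact mul_le_mul_of_nonneg_left (hywle i t ht) (l1GR_nonneg ν _)
        refine le_trans (Finset.sum_le_sum h2) ?_
        rw [← Finset.sum_mul, mul_comm]
        exact mul_le_mul_of_nonneg_left (hb i) hC2pos.le
      refine le_trans (Finset.sum_le_sum fun i (_ : i ∈ Finset.univ) => h1 i) ?_
      rw [← Finset.mul_sum]
      exact le_of_eq rfl
    have hzle : l1Free ν z ≤ K * l1Free ν x := by
      have h0 : z = ∑ i, x i • s (mM i) := by
        rw [hz, ← hx]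
        have h1 : s (ρM x) = (s.comp ρM) x := rfl
        rw [h1, LinearMap.pi_apply_eq_sum_univ (s.comp ρM) x]
        refine Finset.sum_congr rfl fun i _ => ?_
        rw [LinearMap.comp_apply, hmM]
      rw [h0]
      refine le_trans (l1F_sum_le ν _ _) ?_
      have h2 : ∀ i, l1Free ν (x i • s (mM i)) ≤ l1GroupRing ν (x i) * K := by
        intro i
        refine le_trans (l1F_smul_le ν _ _) ?_
        exact mul_le_mul_of_nonneg_left (hsmle i) (l1GR_nonneg ν _)
      refine le_trans (Finset.sum_le_sum fun i (_ : i ∈ Finset.univ) => h2 i) ?_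
      rw [← Finset.sum_mul, mul_comm]
      rfl
    calc l1Free ν Y ≤ C2 * l1Free ν z := hYle
      _ ≤ C2 * (K * l1Free ν x) := mul_le_mul_of_nonneg_left hzle hC2pos.le
      _ = (C2 * K) * l1Free ν x := by ring
  -- ################ conclusion ################
  constructor
  · rw [inv_mul_le_iff₀ hCpos]
    calc fillingNorm ν ρN n ≤ (C2 * K) * fillingNorm ν ρM (n : M) := dir2
      _ ≤ C * fillingNorm ν ρM (n : M) :=
        mul_le_mul_of_nonneg_right (le_max_right _ _) (fill_nonneg ν ρM _)
  · calc fillingNorm ν ρM (n : M) ≤ C1 * fillingNorm ν ρN n := dir1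
      _ ≤ C * fillingNorm ν ρN n :=
        mul_le_mul_of_nonneg_right (le_max_left _ _) (fill_nonneg ν ρN _)
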